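/- Every complex number Δ on or inside the curve φ ↦ e^{iφ}/(sin(φ/4)+cos(φ/4))⁴ that lies in B₄|_circ is realized by four unit vectors in ℂ²: specifically, for each φ ∈ [0, 2π) the boundary point e^{iφ}/(sin(φ/4)+cos(φ/4))⁴ equals (sin²θ + i cos²θ)⁴ for θ with tan(φ/4) = cos²θ/sin²θ, realized by the qubit tuple |ψ_k⟩ = sin θ|0⟩ + i^k cos θ|1⟩, k = 0,...,3. -/

import Mathlib

open Matrix Real

/-- Every boundary point `e^{iφ}/(sin(φ/4)+cos(φ/4))⁴`, `φ ∈ [0,2π)`, of `B₄|_circ`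
is realized by the qubit tuple `ψ_k = sin θ|0⟩ + i^k cos θ|1⟩` where
`tan(φ/4) = cos²θ/sin²θ`. -/
theorem circulant_boundary_qubit_realization (φ : ℝ) (hφ₀ : 0 ≤ φ) (hφ : φ < 2 * π) :
    ∃ θ : ℝ, tan (φ / 4) = cos θ ^ 2 / sin θ ^ 2 ∧
      Complex.exp (φ * Complex.I) / ((sin (φ / 4) + cos (φ / 4) : ℝ) : ℂ) ^ 4
        = ((sin θ ^ 2 : ℝ) + Complex.I * (cos θ ^ 2 : ℝ)) ^ 4 ∧
      ∃ ψ : Fin 4 → Fin 2 → ℂ,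
        (∀ k : Fin 4, ψ k = ![(sin θ : ℂ), Complex.I ^ (k : ℕ) * (cos θ : ℂ)]) ∧
        (∀ k, star (ψ k) ⬝ᵥ ψ k = 1) ∧
        (star (ψ 0) ⬝ᵥ ψ 1) * (star (ψ 1) ⬝ᵥ ψ 2) * (star (ψ 2) ⬝ᵥ ψ 3)
            * (star (ψ 3) ⬝ᵥ ψ 0)
          = Complex.exp (φ * Complex.I)
              / ((sin (φ / 4) + cos (φ / 4) : ℝ) : ℂ) ^ 4 := by
  have hpi := Real.pi_pos
  set s : ℝ := φ / 4 with hs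
  have hs0 : 0 ≤ s := by positivity
  have hs1 : s < π / 2 := by rw [hs]; linarith
  have hcos : 0 < cos s := Real.cos_pos_of_mem_Ioo ⟨by linarith, hs1⟩
  have hsin : 0 ≤ sin s := Real.sin_nonneg_of_nonneg_of_le_pi hs0 (by linarith)
  have hd : 0 < sin s + cos s := by linarith
  set A : ℝ := cos s / (sin s + cos s) with hA
  set B : ℝ := sin s / (sin s + cos s) with hB
  have hAB : A + B = 1 := by rw [hA, hB]; field_simp; ring_nf
  have hA0 : 0 ≤ A := div_nonneg hcos.le hd.le
  have hB0 : 0 ≤ B := div_nonneg hsin hd.le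
  have hA1 : A ≤ 1 := by linarith
  set θ : ℝ := Real.arcsin (Real.sqrt A) with hθ
  have hsinθ : sin θ = Real.sqrt A := by
    rw [hθ]
    exact Real.sin_arcsin (by linarith [Real.sqrt_nonneg A]) (by
      rw [show (1:ℝ) = Real.sqrt 1 by simp]
      exact Real.sqrt_le_sqrt hA1)
  have hsin2 : sin θ ^ 2 = A := by rw [hsinθ, Real.sq_sqrt hA0]
  have hcos2 : cos θ ^ 2 = B := by
    have := Real.sin_sq_add_cos_sq θ
    rw [hsin2] at this; linarith
  have hdc : ((sin s + cos s : ℝ) : ℂ) ≠ 0 := by exact_mod_cast ne_of_gt hd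
  have hkey : ((sin θ ^ 2 : ℝ) : ℂ) + Complex.I * ((cos θ ^ 2 : ℝ) : ℂ)
      = Complex.exp (s * Complex.I) / ((sin s + cos s : ℝ) : ℂ) := by
    rw [hsin2, hcos2, Complex.exp_mul_I, hA, hB]
    push_cast
    push_cast at hdc
    field_simp
  have hmain : Complex.exp (φ * Complex.I) / ((sin s + cos s : ℝ) : ℂ) ^ 4
      = (((sin θ ^ 2 : ℝ) : ℂ) + Complex.I * ((cos θ ^ 2 : ℝ) : ℂ)) ^ 4 := by
    rw [hkey, div_pow, ← Complex.exp_nat_mul]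
    congr 1
    push_cast
    rw [hs]; push_cast; ring
  refine ⟨θ, ?_, hmain, ?_⟩
  · rw [Real.tan_eq_sin_div_cos, hsin2, hcos2, hA, hB]
    rw [div_div_div_eq]
    rw [mul_comm (sin s), mul_div_mul_left _ _ (ne_of_gt hd)]
  · refine ⟨fun k => ![(sin θ : ℂ), Complex.I ^ (k : ℕ) * (cos θ : ℂ)],
      fun k => rfl, ?_, ?_⟩
    · intro k
      simp only [dotProduct, Fin.sum_univ_two, Pi.star_apply,
        Matrix.cons_val_zero, Matrix.cons_val_one, Matrix.head_cons,
        RCLike.star_def, Complex.conj_ofReal, _root_.map_mul, _root_.map_pow, Complex.conj_I]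
      have : (-Complex.I) ^ (k:ℕ) * (cos θ : ℂ) * (Complex.I ^ (k:ℕ) * (cos θ : ℂ))
          = ((-Complex.I) * Complex.I) ^ (k:ℕ) * (cos θ : ℂ)^2 := by
        rw [mul_pow]; ring
      rw [this]
      simp only [neg_mul, Complex.I_mul_I, neg_neg, one_pow, one_mul]
      norm_cast
      nlinarith [Real.sin_sq_add_cos_sq θ]
    · have hip : ∀ m n : ℕ, n = m + 1 →
          star (![(sin θ : ℂ), Complex.I ^ m * (cos θ : ℂ)]) ⬝ᵥ
            (![(sin θ : ℂ), Complex.I ^ n * (cos θ : ℂ)])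
          = ((sin θ ^ 2 : ℝ) : ℂ) + Complex.I * ((cos θ ^ 2 : ℝ) : ℂ) := by
        intro m n hn
        subst hn
        simp only [dotProduct, Fin.sum_univ_two, Pi.star_apply,
          Matrix.cons_val_zero, Matrix.cons_val_one, Matrix.head_cons,
          RCLike.star_def, Complex.conj_ofReal, _root_.map_mul, _root_.map_pow, Complex.conj_I]
        have : (-Complex.I) ^ m * (cos θ : ℂ) * (Complex.I ^ (m+1) * (cos θ : ℂ))
            = ((-Complex.I) * Complex.I) ^ m * Complex.I * (cos θ : ℂ)^2 := by
          rw [mul_pow, pow_succ]; ring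
        rw [this]
        simp only [neg_mul, Complex.I_mul_I, neg_neg, one_pow, one_mul]
        push_cast
        ring
      have h01 := hip 0 1 rfl
      have h12 := hip 1 2 rfl
      have h23 := hip 2 3 rfl
      have h30 : star (![(sin θ : ℂ), Complex.I ^ (3:ℕ) * (cos θ : ℂ)]) ⬝ᵥ
            (![(sin θ : ℂ), Complex.I ^ (0:ℕ) * (cos θ : ℂ)])
          = ((sin θ ^ 2 : ℝ) : ℂ) + Complex.I * ((cos θ ^ 2 : ℝ) : ℂ) := by
        have h34 := hip 3 4 rfl
        rw [← h34]
        norm_num [Complex.I_pow_four]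
      simp only [show ((0:Fin 4):ℕ) = 0 from rfl, show ((1:Fin 4):ℕ) = 1 from rfl,
        show ((2:Fin 4):ℕ) = 2 from rfl, show ((3:Fin 4):ℕ) = 3 from rfl]
      rw [h01, h12, h23, h30, hmain]
      ring
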